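/- If each player's weight is the same across all resources (w_{j,k} = w_j for all k), then the PPA-Game admits a pure Nash equilibrium; moreover, every improvement path is finite. -/

import Mathlib

open Finset

/-- Total weight on resource `k` under profile `π`. -/
noncomputable def Wt {N K : ℕ} (w : Fin N → Fin K → ℝ) (π : Fin N → Fin K) (k : Fin K) : ℝ :=
  ∑ j : Fin N, if π j = k then w j k else 0

/-- Utility of player `j` in the PPA-Game. -/
noncomputable def U {N K : ℕ} (μ : Fin K → ℝ) (w : Fin N → Fin K → ℝ)
    (π : Fin N → Fin K) (j : Fin N) : ℝ :=
  if 0 < Wt w π (π j) then μ (π j) * w j (π j) / Wt w π (π j) else 0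

/-- Pure Nash equilibrium of the PPA-Game. -/
def IsPNE {N K : ℕ} (μ : Fin K → ℝ) (w : Fin N → Fin K → ℝ) (π : Fin N → Fin K) : Prop :=
  ∀ j : Fin N, ∀ k' : Fin K, U μ w (Function.update π j k') j ≤ U μ w π j

/-- A unilateral deviation by one player that strictly increases that player's utility. -/
def ImprovementStep {N K : ℕ} (μ : Fin K → ℝ) (w : Fin N → Fin K → ℝ)
    (π π' : Fin N → Fin K) : Prop :=
  ∃ (j : Fin N) (k' : Fin K), π' = Function.update π j k' ∧ U μ w π' j > U μ w π j

lemma Wt_update {N K : ℕ} (w : Fin N → Fin K → ℝ) (π : Fin N → Fin K) (j : Fin N)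
    (k' : Fin K) (m : Fin K) :
    Wt w (Function.update π j k') m
      = Wt w π m + (if k' = m then w j m else 0) - (if π j = m then w j m else 0) := by
  unfold Wt
  rw [← Finset.add_sum_erase _ (fun i => if (Function.update π j k') i = m then w i m else 0)
        (Finset.mem_univ j),
      ← Finset.add_sum_erase _ (fun i => if π i = m then w i m else 0) (Finset.mem_univ j)]
  have hs : ∑ i ∈ Finset.univ.erase j, (if (Function.update π j k') i = m then w i m else 0)
       = ∑ i ∈ Finset.univ.erase j, (if π i = m then w i m else 0) := by
    apply Finset.sum_congr rfl
    intro i hi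
    rw [Function.update_of_ne (Finset.ne_of_mem_erase hi)]
  rw [hs, Function.update_self]
  ring

lemma Wt_nonneg {N K : ℕ} (w : Fin N → Fin K → ℝ) (hw : ∀ j k, 0 ≤ w j k)
    (π : Fin N → Fin K) (m : Fin K) : 0 ≤ Wt w π m := by
  apply Finset.sum_nonneg
  intro i _
  split <;> simp [hw]

lemma le_Wt {N K : ℕ} (w : Fin N → Fin K → ℝ) (hw : ∀ j k, 0 ≤ w j k)
    (π : Fin N → Fin K) (j : Fin N) : w j (π j) ≤ Wt w π (π j) := by
  have := Finset.single_le_sum (f := fun i => if π i = π j then w i (π j) else 0)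
    (fun i _ => by split <;> simp [hw]) (Finset.mem_univ j)
  simpa [Wt] using this

lemma improve_dec {N K : ℕ} (μ : Fin K → ℝ) (w : Fin N → Fin K → ℝ)
    (hμ : ∀ k, 0 < μ k) (hw : ∀ j k, 0 ≤ w j k)
    (hhom : ∀ (j : Fin N) (k k' : Fin K), w j k = w j k')
    {π π' : Fin N → Fin K} (h : ImprovementStep μ w π π') :
    ∃ d : ℝ,
      (Finset.univ.filter (fun m => d ≤ Wt w π' m / μ m)).card
        < (Finset.univ.filter (fun m => d ≤ Wt w π m / μ m)).card ∧
      ∀ v : ℝ, d < v →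
        (Finset.univ.filter (fun m => v ≤ Wt w π' m / μ m))
          = (Finset.univ.filter (fun m => v ≤ Wt w π m / μ m)) := by
  obtain ⟨j, k', hπ', himp⟩ := h
  set k := π j with hk
  -- j's weight is positive
  have hwj : 0 < w j k := by
    rcases (hw j k).lt_or_eq with h0 | h0
    · exact h0
    · exfalso
      have hz : ∀ m, w j m = 0 := fun m => by rw [hhom j m k, ← h0]
      have h1 : U μ w π j = 0 := by
        unfold U; rw [hz]; split <;> simp
      have h2 : U μ w π' j = 0 := by
        unfold U; rw [hz]; split <;> simp
      rw [h1, h2] at himp; exact lt_irrefl 0 himp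
  have hkk' : k' ≠ k := by
    intro he
    rw [he] at hπ'
    rw [hk, Function.update_eq_self] at hπ'
    rw [hπ'] at himp; exact lt_irrefl _ himp
  have hπ'j : π' j = k' := by rw [hπ', Function.update_self]
  have hwjk' : w j k' = w j k := hhom j k' k
  -- weights on resources
  have hA0 : 0 < Wt w π k := lt_of_lt_of_le hwj (le_Wt w hw π j)
  have hB0 : 0 ≤ Wt w π k' := Wt_nonneg w hw π k'
  have hWk' : Wt w π' k' = Wt w π k' + w j k := by
    rw [hπ', Wt_update]
    simp [hkk', Ne.symm hkk', hwjk', ← hk]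
  have hWk : Wt w π' k = Wt w π k - w j k := by
    rw [hπ', Wt_update]
    simp [hkk', ← hk]
  have hWm : ∀ m, m ≠ k → m ≠ k' → Wt w π' m = Wt w π m := by
    intro m h1 h2
    rw [hπ', Wt_update]
    rw [if_neg (fun hh => h2 hh.symm), if_neg (fun hh : π j = m => h1 (hh ▸ hk))]
    ring
  -- utilities
  have hUπ : U μ w π j = μ k * w j k / Wt w π k := by
    unfold U; rw [← hk, if_pos hA0]
  have hUπ' : U μ w π' j = μ k' * w j k / (Wt w π k' + w j k) := by
    unfold U
    rw [hπ'j, hWk', hwjk', if_pos (by linarith)]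
  rw [hUπ, hUπ'] at himp
  set A := Wt w π k with hAdef
  set B := Wt w π k' with hBdef
  have hμk := hμ k
  have hμk' := hμ k'
  -- key inequality
  have hkey : (B + w j k) / μ k' < A / μ k := by
    rw [div_lt_div_iff₀ hμk' hμk]
    have h1 : μ k * w j k / A < μ k' * w j k / (B + w j k) := himp
    rw [div_lt_div_iff₀ hA0 (by linarith)] at h1
    nlinarith
  set d : ℝ := A / μ k with hddef
  have f1 : Wt w π' k' / μ k' < d := by rw [hWk']; exact hkey
  have f2 : Wt w π' k / μ k < d := by
    rw [hWk, hddef, div_lt_div_iff_of_pos_right hμk]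
    linarith
  have f3 : B / μ k' < d := by
    have : B / μ k' ≤ (B + w j k) / μ k' := by
      gcongr
      · linarith [hw j k]
    linarith
  have hd_eq : Wt w π k / μ k = d := by rw [← hAdef]
  have hd_eq' : Wt w π k' = B := hBdef.symm
  refine ⟨d, ?_, ?_⟩
  · apply Finset.card_lt_card
    have hsub : (Finset.univ.filter (fun m => d ≤ Wt w π' m / μ m))
        ⊆ (Finset.univ.filter (fun m => d ≤ Wt w π m / μ m)) := by
      intro m hm
      simp only [Finset.mem_filter, Finset.mem_univ, true_and] at hm ⊢
      rcases eq_or_ne m k with hmk | hmk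
      · exfalso; rw [hmk] at hm; linarith
      rcases eq_or_ne m k' with hmk' | hmk'
      · exfalso; rw [hmk'] at hm; linarith
      rw [← hWm m hmk hmk']; exact hm
    rw [Finset.ssubset_iff_of_subset hsub]
    refine ⟨k, ?_, ?_⟩
    · simp only [Finset.mem_filter, Finset.mem_univ, true_and]
      rw [hd_eq]
    · simp only [Finset.mem_filter, Finset.mem_univ, true_and]
      push_neg
      exact f2
  · intro v hv
    ext m
    simp only [Finset.mem_filter, Finset.mem_univ, true_and]
    rcases eq_or_ne m k with hmk | hmk
    · rw [hmk]
      constructor <;> intro hm <;> exfalso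
      · linarith
      · rw [hd_eq] at hm; linarith
    rcases eq_or_ne m k' with hmk' | hmk'
    · rw [hmk']
      constructor <;> intro hm <;> exfalso
      · linarith
      · rw [hd_eq'] at hm; linarith
    rw [hWm m hmk hmk']

lemma Rtrans {f g h : ℝ → ℕ}
    (h1 : ∃ d, f d < g d ∧ ∀ v, d < v → f v = g v)
    (h2 : ∃ d, g d < h d ∧ ∀ v, d < v → g v = h v) :
    ∃ d, f d < h d ∧ ∀ v, d < v → f v = h v := by
  obtain ⟨d1, h1a, h1b⟩ := h1
  obtain ⟨d2, h2a, h2b⟩ := h2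
  rcases lt_trichotomy d1 d2 with hd | hd | hd
  · exact ⟨d2, by rw [h1b d2 hd]; exact h2a,
      fun v hv => by rw [h1b v (lt_trans hd hv), h2b v hv]⟩
  · subst hd
    exact ⟨d1, lt_trans h1a h2a, fun v hv => by rw [h1b v hv, h2b v hv]⟩
  · exact ⟨d1, by rw [← h2b d1 hd]; exact h1a,
      fun v hv => by rw [h1b v hv, h2b v (lt_trans hd hv)]⟩


/-- if each player's weight is the same across resources, the PPA-Game
admits a PNE; moreover every improvement path is finite (no infinite improvement path). -/
theorem stmt4 {N K : ℕ} (hN : 2 ≤ N) (hK : 2 ≤ K)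
    (μ : Fin K → ℝ) (w : Fin N → Fin K → ℝ)
    (hμ : ∀ k, 0 < μ k ∧ μ k ≤ 1) (hw : ∀ j k, 0 ≤ w j k ∧ w j k ≤ 1)
    (hhom : ∀ (j : Fin N) (k k' : Fin K), w j k = w j k') :
    (∃ π : Fin N → Fin K, IsPNE μ w π) ∧
      ¬ ∃ ℓ : ℕ → (Fin N → Fin K), ∀ t : ℕ, ImprovementStep μ w (ℓ t) (ℓ (t + 1)) := by
  have hμ' : ∀ k, 0 < μ k := fun k => (hμ k).1
  have hw' : ∀ j k, 0 ≤ w j k := fun j k => (hw j k).1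
  have noinf : ¬ ∃ ℓ : ℕ → (Fin N → Fin K),
      ∀ t : ℕ, ImprovementStep μ w (ℓ t) (ℓ (t + 1)) := by
    rintro ⟨ℓ, hℓ⟩
    set Φ : (Fin N → Fin K) → ℝ → ℕ :=
      fun π v => (Finset.univ.filter (fun m => v ≤ Wt w π m / μ m)).card with hΦ
    have key : ∀ t, ∃ d, Φ (ℓ (t+1)) d < Φ (ℓ t) d ∧
        ∀ v, d < v → Φ (ℓ (t+1)) v = Φ (ℓ t) v := by
      intro t
      obtain ⟨d, h1, h2⟩ := improve_dec μ w hμ' hw' hhom (hℓ t)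
      refine ⟨d, h1, fun v hv => ?_⟩
      simp only [hΦ]
      rw [h2 v hv]
    have chain : ∀ s t, s < t → ∃ d, Φ (ℓ t) d < Φ (ℓ s) d ∧
        ∀ v, d < v → Φ (ℓ t) v = Φ (ℓ s) v := by
      intro s t hst
      induction t with
      | zero => omega
      | succ t ih =>
        rcases Nat.lt_succ_iff_lt_or_eq.mp hst with h | h
        · exact Rtrans (key t) (ih h)
        · subst h; exact key s
    obtain ⟨s, t, hne, heq⟩ := Finite.exists_ne_map_eq_of_infinite ℓ
    rcases hne.lt_or_gt with h | h
    · obtain ⟨d, hlt, -⟩ := chain s t h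
      rw [heq] at hlt
      exact lt_irrefl _ hlt
    · obtain ⟨d, hlt, -⟩ := chain t s h
      rw [heq] at hlt
      exact lt_irrefl _ hlt
  refine ⟨?_, noinf⟩
  by_contra hno
  push_neg at hno
  have step : ∀ π : Fin N → Fin K, ∃ π', ImprovementStep μ w π π' := by
    intro π
    have h := hno π
    unfold IsPNE at h
    push_neg at h
    obtain ⟨j, k', hjk⟩ := h
    exact ⟨Function.update π j k', j, k', rfl, hjk⟩
  let ℓ : ℕ → (Fin N → Fin K) :=
    fun t => Nat.rec (fun _ => (⟨0, by omega⟩ : Fin K))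
      (fun _ π => Classical.choose (step π)) t
  have hℓ : ∀ t, ImprovementStep μ w (ℓ t) (ℓ (t+1)) :=
    fun t => Classical.choose_spec (step (ℓ t))
  exact noinf ⟨ℓ, hℓ⟩
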